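/- Let y_1,…,y_n ∈ ℝ^d with d ≥ 2 be in general position (i.e., any d of them are linearly independent). Then the positive hull pos{y_1,…,y_n} = {Σ λ_i y_i : λ_1,…,λ_n ≥ 0} equals ℝ^d if and only if there exists α = (α_1,…,α_n) ∈ ℝ^n with all α_i ≥ 0, α ≠ 0, and α_1 y_1 + ⋯ + α_n y_n = 0. -/

import Mathlib

open scoped RealInnerProductSpace BigOperators Pointwise

noncomputable section

/-- The unsigned Stirling numbers of the first kind `⎡n,k⎤`, defined as the coefficients of
the polynomial identity `t (t+1) ⋯ (t+n-1) = ∑ k, ⎡n,k⎤ t^k`. -/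
def stirlingFirst (n k : ℕ) : ℕ :=
  (∏ i ∈ Finset.range n, (Polynomial.X + Polynomial.C i : Polynomial ℕ)).coeff k

/-- The B-analogues `B[n,k]` of the Stirling numbers of the first kind, defined as the
coefficients of `(t+1)(t+3)⋯(t+2n-1) = ∑ k, B[n,k] t^k`. -/
def stirlingFirstB (n k : ℕ) : ℕ :=
  (∏ i ∈ Finset.range n, (Polynomial.X + Polynomial.C (2 * i + 1) : Polynomial ℕ)).coeff k

/-- `D^A(n,d) = 2(⎡n, n-d+1⎤ + ⎡n, n-d+3⎤ + ⋯)`. -/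
def DA (n d : ℕ) : ℕ := 2 * ∑ j ∈ Finset.range d, stirlingFirst n (n - d + 1 + 2 * j)

/-- `D^B(n,d) = 2(B[n, n-d+1] + B[n, n-d+3] + ⋯)`. -/
def DB (n d : ℕ) : ℕ := 2 * ∑ j ∈ Finset.range d, stirlingFirstB n (n - d + 1 + 2 * j)

/-- Stirling numbers of the second kind: the number of partitions of `{1,…,n}` into `k`
non-empty subsets. -/
def stirlingSecond (n k : ℕ) : ℕ :=
  Set.ncard {P : Finset (Finset (Fin n)) |
    P.card = k ∧ (∀ s ∈ P, s.Nonempty) ∧ ∀ i : Fin n, ∃! s, s ∈ P ∧ i ∈ s}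

/-- B-analogues of the Stirling numbers of the second kind:
`S_B(n,k) = ∑_{r=k}^n C(n,r) S(r,k) 2^{r-k}`. -/
def stirlingSecondB (n k : ℕ) : ℕ :=
  ∑ r ∈ Finset.Icc k n, Nat.choose n r * stirlingSecond r k * 2 ^ (r - k)

/-- The `i`-th of the `n-1` difference vectors `y_{σ(i)} - y_{σ(i+1)}` (0-indexed). -/
def diffA (d n : ℕ) (y : Fin n → EuclideanSpace ℝ (Fin d)) (σ : Equiv.Perm (Fin n))
    (i : Fin (n - 1)) : EuclideanSpace ℝ (Fin d) :=
  y (σ ⟨i.val, by have := i.isLt; omega⟩) - y (σ ⟨i.val + 1, by have := i.isLt; omega⟩)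

/-- Condition (A1): `n ≥ d+1` and for every permutation `σ`, any `d` of the vectors
`y_{σ(1)}-y_{σ(2)}, …, y_{σ(n-1)}-y_{σ(n)}` are linearly independent. -/
def CondA1 (d n : ℕ) (y : Fin n → EuclideanSpace ℝ (Fin d)) : Prop :=
  d + 1 ≤ n ∧
    ∀ σ : Equiv.Perm (Fin n), ∀ s : Finset (Fin (n - 1)), s.card = d →
      LinearIndependent ℝ (fun i : s => diffA d n y σ i.1)

/-- A vector of signs `ε ∈ {±1}^n`. -/
def IsSignVec {n : ℕ} (ε : Fin n → ℝ) : Prop := ∀ i, ε i = 1 ∨ ε i = -1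

/-- The `i`-th of the `n` vectors `ε_1 y_{σ(1)} - ε_2 y_{σ(2)}, …,
`ε_{n-1} y_{σ(n-1)} - ε_n y_{σ(n)}, ε_n y_{σ(n)}` (0-indexed). -/
def diffB (d n : ℕ) (y : Fin n → EuclideanSpace ℝ (Fin d)) (ε : Fin n → ℝ)
    (σ : Equiv.Perm (Fin n)) (i : Fin n) : EuclideanSpace ℝ (Fin d) :=
  if h : i.val + 1 < n then
    ε i • y (σ i) - ε ⟨i.val + 1, h⟩ • y (σ ⟨i.val + 1, h⟩)
  else ε i • y (σ i)

/-- Condition (B1): `n ≥ d` and for every sign vector `ε` and permutation `σ`, any `d` of the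
vectors `ε_1 y_{σ(1)}-ε_2 y_{σ(2)}, …, ε_{n-1}y_{σ(n-1)}-ε_n y_{σ(n)}, ε_n y_{σ(n)}` are
linearly independent. -/
def CondB1 (d n : ℕ) (y : Fin n → EuclideanSpace ℝ (Fin d)) : Prop :=
  d ≤ n ∧
    ∀ ε : Fin n → ℝ, IsSignVec ε → ∀ σ : Equiv.Perm (Fin n),
      ∀ s : Finset (Fin n), s.card = d →
        LinearIndependent ℝ (fun i : s => diffB d n y ε σ i.1)

/-- The cone `D^A_σ = {v : ⟨v,y_{σ(1)}⟩ ≤ ⋯ ≤ ⟨v,y_{σ(n)}⟩}`. -/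
def ConeA (d n : ℕ) (y : Fin n → EuclideanSpace ℝ (Fin d)) (σ : Equiv.Perm (Fin n)) :
    Set (EuclideanSpace ℝ (Fin d)) :=
  {v | Monotone fun i : Fin n => (⟪v, y (σ i)⟫)}

/-- The Weyl tessellation of type `A_{n-1}`: all cones `D^A_σ` different from `{0}`. -/
def WeylA (d n : ℕ) (y : Fin n → EuclideanSpace ℝ (Fin d)) :
    Set (Set (EuclideanSpace ℝ (Fin d))) :=
  {C | (∃ σ, C = ConeA d n y σ) ∧ C ≠ {0}}

/-- The cone `D^B_{ε,σ} = {v : ε_1⟨v,y_{σ(1)}⟩ ≤ ⋯ ≤ ε_n⟨v,y_{σ(n)}⟩ ≤ 0}`. -/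
def ConeB (d n : ℕ) (y : Fin n → EuclideanSpace ℝ (Fin d)) (ε : Fin n → ℝ)
    (σ : Equiv.Perm (Fin n)) : Set (EuclideanSpace ℝ (Fin d)) :=
  {v | (Monotone fun i : Fin n => ε i * ⟪v, y (σ i)⟫) ∧
    ∀ i : Fin n, ε i * ⟪v, y (σ i)⟫ ≤ 0}

/-- The Weyl tessellation of type `B_n`: all cones `D^B_{ε,σ}` different from `{0}`. -/
def WeylB (d n : ℕ) (y : Fin n → EuclideanSpace ℝ (Fin d)) :
    Set (Set (EuclideanSpace ℝ (Fin d))) :=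
  {C | (∃ ε σ, IsSignVec ε ∧ C = ConeB d n y ε σ) ∧ C ≠ {0}}

/-- The cone `F^A_σ(l_1,…,l_m)` (with the `l_j` being 1-indexed): within the chain
`⟨v,y_{σ(1)}⟩ ≤ ⋯ ≤ ⟨v,y_{σ(n)}⟩` the inequality at a 1-indexed position `i ∉ {l_1,…,l_m}`
is replaced by an equality. -/
def FaceA (d n : ℕ) (y : Fin n → EuclideanSpace ℝ (Fin d)) (σ : Equiv.Perm (Fin n))
    (m : ℕ) (l : Fin m → ℕ) : Set (EuclideanSpace ℝ (Fin d)) :=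
  {v | (Monotone fun i : Fin n => (⟪v, y (σ i)⟫)) ∧
    ∀ (p : ℕ) (hp : p + 1 < n), (∀ j, l j ≠ p + 1) →
      ⟪v, y (σ ⟨p, by omega⟩)⟫ = ⟪v, y (σ ⟨p + 1, hp⟩)⟫}

/-- Admissible break positions for type `A`: `1 ≤ l_1 < ⋯ < l_m ≤ n-1`. -/
def ValidA (n m : ℕ) (l : Fin m → ℕ) : Prop :=
  StrictMono l ∧ ∀ j, 1 ≤ l j ∧ l j ≤ n - 1

/-- The set `𝓕^A_k(y_1,…,y_n)` of `k`-faces of the Weyl tessellation of type `A_{n-1}`: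
all nonzero cones of the form `F^A_σ(l_1,…,l_{n-d+k-1})`. -/
def FacesA (d n k : ℕ) (y : Fin n → EuclideanSpace ℝ (Fin d)) :
    Set (Set (EuclideanSpace ℝ (Fin d))) :=
  {F | (∃ (σ : Equiv.Perm (Fin n)) (l : Fin (n - d + k - 1) → ℕ),
      ValidA n (n - d + k - 1) l ∧ F = FaceA d n y σ (n - d + k - 1) l) ∧ F ≠ {0}}

/-- The cone `F^B_{ε,σ}(l_1,…,l_m)` (with the `l_j` being 1-indexed): within the chain
`ε_1⟨v,y_{σ(1)}⟩ ≤ ⋯ ≤ ε_n⟨v,y_{σ(n)}⟩ ≤ 0` the inequality at a 1-indexed position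
`i ∉ {l_1,…,l_m}` is replaced by an equality; in particular all `⟨v,y_{σ(i)}⟩` with
`i > l_m` vanish. -/
def FaceB (d n : ℕ) (y : Fin n → EuclideanSpace ℝ (Fin d)) (ε : Fin n → ℝ)
    (σ : Equiv.Perm (Fin n)) (m : ℕ) (l : Fin m → ℕ) : Set (EuclideanSpace ℝ (Fin d)) :=
  {v | (Monotone fun i : Fin n => ε i * ⟪v, y (σ i)⟫) ∧
    (∀ i : Fin n, ε i * ⟪v, y (σ i)⟫ ≤ 0) ∧
    (∀ (p : ℕ) (hp : p + 1 < n), (∀ j, l j ≠ p + 1) →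
      ε ⟨p, by omega⟩ * ⟪v, y (σ ⟨p, by omega⟩)⟫ =
        ε ⟨p + 1, hp⟩ * ⟪v, y (σ ⟨p + 1, hp⟩)⟫) ∧
    (∀ (p : ℕ) (hp : p < n), (∀ j, l j ≤ p) → ⟪v, y (σ ⟨p, hp⟩)⟫ = 0)}

/-- Admissible break positions for type `B`: `1 ≤ l_1 < ⋯ < l_m ≤ n`. -/
def ValidB (n m : ℕ) (l : Fin m → ℕ) : Prop :=
  StrictMono l ∧ ∀ j, 1 ≤ l j ∧ l j ≤ n

/-- The set `𝓕^B_k(y_1,…,y_n)` of `k`-faces of the Weyl tessellation of type `B_n`: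
all nonzero cones of the form `F^B_{ε,σ}(l_1,…,l_{n-d+k})`. -/
def FacesB (d n k : ℕ) (y : Fin n → EuclideanSpace ℝ (Fin d)) :
    Set (Set (EuclideanSpace ℝ (Fin d))) :=
  {F | (∃ (ε : Fin n → ℝ) (σ : Equiv.Perm (Fin n)) (l : Fin (n - d + k) → ℕ),
      IsSignVec ε ∧ ValidB n (n - d + k) l ∧ F = FaceB d n y ε σ (n - d + k) l) ∧ F ≠ {0}}

/-- The multiplicity `l_1!(l_2-l_1)!⋯(l_m-l_{m-1})!(n-l_m)!`. -/
def MultA (n m : ℕ) (l : Fin m → ℕ) : ℕ :=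
  (∏ j : Fin m, Nat.factorial
      (l j - if _ : j.val = 0 then 0 else l ⟨j.val - 1, by have := j.isLt; omega⟩)) *
    (if h : 0 < m then Nat.factorial (n - l ⟨m - 1, by omega⟩) else Nat.factorial n)

/-- The multiplicity `l_1!(l_2-l_1)!⋯(l_m-l_{m-1})!(n-l_m)! 2^{n-l_m}`. -/
def MultB (n m : ℕ) (l : Fin m → ℕ) : ℕ :=
  (∏ j : Fin m, Nat.factorial
      (l j - if _ : j.val = 0 then 0 else l ⟨j.val - 1, by have := j.isLt; omega⟩)) *
    (if h : 0 < m then Nat.factorial (n - l ⟨m - 1, by omega⟩) * 2 ^ (n - l ⟨m - 1, by omega⟩)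
     else Nat.factorial n * 2 ^ n)

/-- The face `C^A_σ(l_1,…,l_m)` of a Weyl chamber of type `A_{n-1}` in `ℝ^n`. -/
def ChamberFaceA (n : ℕ) (σ : Equiv.Perm (Fin n)) (m : ℕ) (l : Fin m → ℕ) :
    Set (EuclideanSpace ℝ (Fin n)) :=
  {β | (Monotone fun i : Fin n => β (σ i)) ∧
    ∀ (p : ℕ) (hp : p + 1 < n), (∀ j, l j ≠ p + 1) → β (σ ⟨p, by omega⟩) = β (σ ⟨p + 1, hp⟩)}

/-- The face `C^B_{ε,σ}(l_1,…,l_m)` of a Weyl chamber of type `B_n` in `ℝ^n`. -/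
def ChamberFaceB (n : ℕ) (ε : Fin n → ℝ) (σ : Equiv.Perm (Fin n)) (m : ℕ) (l : Fin m → ℕ) :
    Set (EuclideanSpace ℝ (Fin n)) :=
  {β | (Monotone fun i : Fin n => ε i * β (σ i)) ∧
    (∀ i : Fin n, ε i * β (σ i) ≤ 0) ∧
    (∀ (p : ℕ) (hp : p + 1 < n), (∀ j, l j ≠ p + 1) →
      ε ⟨p, by omega⟩ * β (σ ⟨p, by omega⟩) = ε ⟨p + 1, hp⟩ * β (σ ⟨p + 1, hp⟩)) ∧
    (∀ (p : ℕ) (hp : p < n), (∀ j, l j ≤ p) → β (σ ⟨p, hp⟩) = 0)}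

/-- The linear subspace `L = {β ∈ ℝ^n : β_1 y_1 + ⋯ + β_n y_n = 0}`. -/
def Lspace (d n : ℕ) (y : Fin n → EuclideanSpace ℝ (Fin d)) :
    Submodule ℝ (EuclideanSpace ℝ (Fin n)) where
  carrier := {β | ∑ i, β i • y i = 0}
  add_mem' := by
    intro a b ha hb
    simp only [Set.mem_setOf_eq] at *
    have h : ∀ i ∈ Finset.univ, (a + b) i • y i = a i • y i + b i • y i := by
      intro i _
      rw [PiLp.add_apply, add_smul]
    rw [Finset.sum_congr rfl h, Finset.sum_add_distrib, ha, hb, add_zero]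
  zero_mem' := by
    simp only [Set.mem_setOf_eq]
    refine Finset.sum_eq_zero fun i _ => ?_
    rw [PiLp.zero_apply, zero_smul]
  smul_mem' := by
    intro c a ha
    simp only [Set.mem_setOf_eq] at *
    have h : ∀ i ∈ Finset.univ, (c • a) i • y i = c • (a i • y i) := by
      intro i _
      rw [PiLp.smul_apply, smul_smul, smul_eq_mul]
    rw [Finset.sum_congr rfl h, ← Finset.smul_sum, ha, smul_zero]

/-- The hyperplane `{β ∈ ℝ^N : β_i = β_j}`. -/
def hypEq (N : ℕ) (i j : Fin N) : Submodule ℝ (EuclideanSpace ℝ (Fin N)) where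
  carrier := {β | β i = β j}
  add_mem' := by
    intro a b ha hb
    simp only [Set.mem_setOf_eq, PiLp.add_apply] at *
    rw [ha, hb]
  zero_mem' := by simp [Set.mem_setOf_eq]
  smul_mem' := by
    intro c a ha
    simp only [Set.mem_setOf_eq, PiLp.smul_apply] at *
    rw [ha]

/-- The hyperplane `{β ∈ ℝ^N : β_i = -β_j}`. -/
def hypOpp (N : ℕ) (i j : Fin N) : Submodule ℝ (EuclideanSpace ℝ (Fin N)) where
  carrier := {β | β i = -β j}
  add_mem' := by
    intro a b ha hb
    simp only [Set.mem_setOf_eq, PiLp.add_apply] at *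
    rw [ha, hb, neg_add]
  zero_mem' := by simp [Set.mem_setOf_eq]
  smul_mem' := by
    intro c a ha
    simp only [Set.mem_setOf_eq, PiLp.smul_apply] at *
    rw [ha, smul_neg]

/-- The hyperplane `{β ∈ ℝ^N : β_i = 0}`. -/
def hypZero (N : ℕ) (i : Fin N) : Submodule ℝ (EuclideanSpace ℝ (Fin N)) where
  carrier := {β | β i = 0}
  add_mem' := by
    intro a b ha hb
    simp only [Set.mem_setOf_eq, PiLp.add_apply] at *
    rw [ha, hb, add_zero]
  zero_mem' := by simp [Set.mem_setOf_eq]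
  smul_mem' := by
    intro c a ha
    simp only [Set.mem_setOf_eq, PiLp.smul_apply] at *
    rw [ha, smul_zero]

/-- The reflection arrangement `𝒜(A_{N-1})` in `ℝ^N`. -/
def ArrA (N : ℕ) : Set (Submodule ℝ (EuclideanSpace ℝ (Fin N))) :=
  {H | ∃ i j : Fin N, i < j ∧ H = hypEq N i j}

/-- The reflection arrangement `𝒜(B_N)` in `ℝ^N`. -/
def ArrB (N : ℕ) : Set (Submodule ℝ (EuclideanSpace ℝ (Fin N))) :=
  {H | (∃ i j : Fin N, i < j ∧ H = hypEq N i j) ∨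
    (∃ i j : Fin N, i < j ∧ H = hypOpp N i j) ∨ ∃ i : Fin N, H = hypZero N i}

/-- Two linear subspaces `U`, `W` of `ℝ^N` are in general position if
`dim (U ∩ W) = max {0, dim U + dim W - N}`. -/
def InGenPos (N : ℕ) (U W : Submodule ℝ (EuclideanSpace ℝ (Fin N))) : Prop :=
  Module.finrank ℝ ↥(U ⊓ W) = Module.finrank ℝ ↥U + Module.finrank ℝ ↥W - N

/-- A linear subspace `U` is in general position with respect to a hyperplane
arrangement `A` if it is in general position with respect to `⋂_{H ∈ B} H` for
every subset `B ⊆ A`. -/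
def InGenPosArr (N : ℕ) (U : Submodule ℝ (EuclideanSpace ℝ (Fin N)))
    (A : Set (Submodule ℝ (EuclideanSpace ℝ (Fin N)))) : Prop :=
  ∀ B ⊆ A, InGenPos N U (sInf B)

/-- The polyhedral cone `{v : ⟨x_1,v⟩ ≤ 0, …, ⟨x_m,v⟩ ≤ 0}`. -/
def PolyCone (d m : ℕ) (x : Fin m → EuclideanSpace ℝ (Fin d)) :
    Set (EuclideanSpace ℝ (Fin d)) :=
  {v | ∀ i, ⟪x i, v⟫ ≤ 0}

/-- The dual cone `C° = {v : ⟨x,v⟩ ≤ 0 ∀ x ∈ C}`. -/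
def DualCone (d : ℕ) (C : Set (EuclideanSpace ℝ (Fin d))) :
    Set (EuclideanSpace ℝ (Fin d)) :=
  {v | ∀ w ∈ C, ⟪w, v⟫ ≤ 0}

/-- The face of `D^B_{ε,σ}` obtained by replacing the inequalities at the (0-indexed)
positions in `E` by equalities. -/
def SubfaceB (d n : ℕ) (y : Fin n → EuclideanSpace ℝ (Fin d)) (ε : Fin n → ℝ)
    (σ : Equiv.Perm (Fin n)) (E : Set (Fin n)) : Set (EuclideanSpace ℝ (Fin d)) :=
  {v | v ∈ ConeB d n y ε σ ∧ ∀ i ∈ E,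
    if h : (i : ℕ) + 1 < n then
      ε i * ⟪v, y (σ i)⟫ = ε ⟨(i : ℕ) + 1, h⟩ * ⟪v, y (σ ⟨(i : ℕ) + 1, h⟩)⟫
    else ε i * ⟪v, y (σ i)⟫ = 0}

end
/-- Lemma 2.10: for vectors in general position, the positive hull is all of `ℝ^d` if and
only if `0` is a nonzero nonnegative combination of the vectors. -/
theorem pos_hull_eq_univ_iff (d n : ℕ) (hd : 2 ≤ d)
    (y : Fin n → EuclideanSpace ℝ (Fin d))
    (hgp : ∀ s : Finset (Fin n), s.card ≤ d →
      LinearIndependent ℝ (fun i : s => y i.1)) :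
    {v | ∃ lam : Fin n → ℝ, (∀ i, 0 ≤ lam i) ∧ v = ∑ i, lam i • y i} = Set.univ ↔
      ∃ a : Fin n → ℝ, (∀ i, 0 ≤ a i) ∧ a ≠ 0 ∧ ∑ i, a i • y i = 0 := by
  
  constructor
  · intro h
    have hn : 0 < n := by
      by_contra hn
      push_neg at hn
      have hn0 : n = 0 := by omega
      subst hn0
      have hv : (EuclideanSpace.single (⟨0, by omega⟩ : Fin d) (1:ℝ)) ∈
          {v | ∃ lam : Fin 0 → ℝ, (∀ i, 0 ≤ lam i) ∧ v = ∑ i, lam i • y i} := by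
        rw [h]; trivial
      obtain ⟨lam, _, hs⟩ := hv
      simp only [Finset.univ_eq_empty, Finset.sum_empty] at hs
      have := congrArg (fun w : EuclideanSpace ℝ (Fin d) => w ⟨0, by omega⟩) hs
      simp [EuclideanSpace.single_apply] at this
    have hv : (-(∑ i, y i)) ∈
        {v | ∃ lam : Fin n → ℝ, (∀ i, 0 ≤ lam i) ∧ v = ∑ i, lam i • y i} := by
      rw [h]; trivial
    obtain ⟨lam, hlam, hsum⟩ := hv
    refine ⟨fun i => lam i + 1, fun i => add_nonneg (hlam i) zero_le_one, ?_, ?_⟩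
    · intro h0
      have := congrFun h0 ⟨0, hn⟩
      simp only [Pi.zero_apply] at this
      linarith [hlam ⟨0, hn⟩]
    · have : ∑ i, (lam i + 1) • y i = ∑ i, lam i • y i + ∑ i, y i := by
        simp [add_smul, Finset.sum_add_distrib]
      rw [this, ← hsum]
      simp
  · rintro ⟨a, ha0, hane, hasum⟩
    apply Set.eq_univ_of_forall
    intro v
    set S : Finset (Fin n) := Finset.univ.filter (fun i => 0 < a i) with hS
    have haS : ∀ i, i ∉ S → a i = 0 := by
      intro i hi
      simp only [hS, Finset.mem_filter, Finset.mem_univ, true_and, not_lt] at hi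
      linarith [ha0 i]
    have hsumS : ∑ i ∈ S, a i • y i = 0 := by
      have heq : ∑ i ∈ S, a i • y i = ∑ i : Fin n, a i • y i :=
        Finset.sum_subset S.subset_univ (fun i _ hi => by rw [haS i hi, zero_smul])
      rw [heq, hasum]
    have hSne : S.Nonempty := by
      by_contra hne
      apply hane
      funext i
      exact haS i (fun hi => hne ⟨i, hi⟩)
    have hScard : d ≤ S.card := by
      by_contra hc
      push_neg at hc
      have hli := hgp S (by omega)
      rw [Fintype.linearIndependent_iff] at hli
      obtain ⟨i0, hi0⟩ := hSne
      have h0 : a i0 = 0 := by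
        refine hli (fun i => a i.1) ?_ ⟨i0, hi0⟩
        rw [← hsumS, ← Finset.sum_coe_sort S (fun i => a i • y i)]
      simp only [hS, Finset.mem_filter, Finset.mem_univ, true_and] at hi0
      linarith
    obtain ⟨T, hTS, hTcard⟩ := Finset.exists_subset_card_eq hScard
    have hTli := hgp T (le_of_eq hTcard)
    have hTne : T.Nonempty := Finset.card_pos.mp (by omega)
    haveI : Nonempty {x // x ∈ T} := ⟨⟨hTne.choose, hTne.choose_spec⟩⟩
    have hspan : Submodule.span ℝ (Set.range (fun i : T => y i.1)) = ⊤ := by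
      apply hTli.span_eq_top_of_card_eq_finrank
      simp [hTcard, finrank_euclideanSpace]
    have hv : v ∈ Submodule.span ℝ (Set.range (fun i : T => y i.1)) := by
      rw [hspan]; trivial
    rw [Submodule.mem_span_range_iff_exists_fun] at hv
    obtain ⟨c, hc⟩ := hv
    set c' : Fin n → ℝ := fun i => if h : i ∈ T then c ⟨i, h⟩ else 0 with hc'
    have hc'sum : ∑ i, c' i • y i = v := by
      rw [← hc]
      rw [← Finset.sum_subset T.subset_univ (fun i _ hi => by simp [hc', hi])]
      rw [← Finset.sum_coe_sort T (fun i => c' i • y i)]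
      apply Finset.sum_congr rfl
      intro i _
      simp [hc', i.2]
    set t : ℝ := max 0 (T.sup' hTne (fun i => (-c' i) / a i)) with ht
    have ht0 : 0 ≤ t := le_max_left _ _
    refine ⟨fun i => c' i + t * a i, ?_, ?_⟩
    · intro i
      show 0 ≤ c' i + t * a i
      by_cases hi : i ∈ T
      · have hai : 0 < a i := by
          have := hTS hi
          simp only [hS, Finset.mem_filter, Finset.mem_univ, true_and] at this
          exact this
        have h1 : (-c' i) / a i ≤ t :=
          le_trans (Finset.le_sup' (fun i => (-c' i) / a i) hi) (le_max_right _ _)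
        rw [div_le_iff₀ hai] at h1
        linarith
      · simp only [hc', dif_neg hi]
        have := ha0 i
        nlinarith
    · show v = ∑ i, (c' i + t * a i) • y i
      have : ∑ i, (c' i + t * a i) • y i = ∑ i, c' i • y i + t • ∑ i, a i • y i := by
        rw [Finset.smul_sum]
        rw [← Finset.sum_add_distrib]
        apply Finset.sum_congr rfl
        intro i _
        rw [add_smul, smul_smul]
      rw [this, hasum, smul_zero, add_zero, hc'sum]
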